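/- Assume α > 2 and that w_s and w_g are nonincreasing and continuous on [0, π] with values in [0, 1] and w_s(0)·w_g(0) > 0. Then liminf_{Δ→0⁺} Δ²·η(Δ) > 0; i.e., the aggregate interference scaled by the squared inter-satellite spacing stays bounded away from zero in the high-density limit. -/

import Mathlib

open Real

/-- Distance `‖s_{i,j}‖ = sqrt((iΔ/2)² + 3(jΔ/2)² + h²)` from the origin terminal to
satellite `s_{i,j}` of the regular configuration. -/
noncomputable def snorm (Δ h : ℝ) (i j : ℤ) : ℝ :=
  Real.sqrt ((i * Δ / 2) ^ 2 + 3 * (j * Δ / 2) ^ 2 + h ^ 2)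

/-- Off-axis angle `θ^reg_{i,j}(Δ) = arccos(h/‖s_{i,j}‖)`. -/
noncomputable def θreg (Δ h : ℝ) (i j : ℤ) : ℝ :=
  Real.arccos (h / snorm Δ h i j)

/-- Aggregate interference-to-noise ratio `η(Δ)` of the regular configuration. -/
noncomputable def ηreg (ws wg : ℝ → ℝ) (h α p σ2 : ℝ) (Δ : ℝ) : ℝ :=
  (p / σ2) * ∑' q : ℤ × ℤ,
    if q.1 % 2 = q.2 % 2 ∧ q ≠ (0, 0) then
      snorm Δ h q.1 q.2 ^ (-α) * (ws (θreg Δ h q.1 q.2) * wg (θreg Δ h q.1 q.2))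
    else 0

/-- Spectral efficiency of the regular configuration,
`R^reg(Δ) = (2/(Δ²√3))·log₂(1 + γ/(η(Δ) + 1))` with `γ = (p/σ²)h^{−α}`. -/
noncomputable def Rreg (ws wg : ℝ → ℝ) (h α p σ2 : ℝ) (Δ : ℝ) : ℝ :=
  (2 / (Δ ^ 2 * Real.sqrt 3)) *
    Real.logb 2 (1 + (p / σ2) * h ^ (-α) / (ηreg ws wg h α p σ2 Δ + 1))

private lemma partial_sum_g_le {β H : ℝ} (hβ : 1 / 2 < β) (hH : 1 ≤ H) (n : ℕ) :
    ∑ i ∈ Finset.range n, ((((i : ℕ) : ℝ) + 1) ^ 2 + H) ^ (-β)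
      ≤ H ^ (1 / 2 - β) * (1 + 1 / (2 * β - 1)) := by
  have hH0 : (0 : ℝ) < H := by linarith
  set g0 : ℝ → ℝ := fun x => (x ^ 2 + H) ^ (-β) with hg0
  have hg0c : Continuous g0 := by
    have h1 : Continuous fun x : ℝ => x ^ 2 + H := by continuity
    exact h1.rpow_const fun x => Or.inl (by positivity)
  have anti : ∀ z : ℝ, AntitoneOn g0 (Set.Icc 0 z) := by
    intro z x hx y hy hxy
    exact Real.rpow_le_rpow_of_nonpos (by positivity)
      (by nlinarith [hx.1, pow_le_pow_left₀ hx.1 hxy 2]) (by linarith)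
  set s : ℝ := Real.sqrt H with hs
  have hs1 : 1 ≤ s := by
    rw [hs, show (1:ℝ) = Real.sqrt 1 by simp]
    exact Real.sqrt_le_sqrt hH
  have hs0 : 0 < s := by linarith
  set m : ℕ := max n ⌈s⌉₊ with hm
  have hsm : s ≤ (m : ℝ) := le_trans (Nat.le_ceil s) (by exact_mod_cast Nat.cast_le.2 (le_max_right _ _))
  -- extend the sum
  have hext : ∑ i ∈ Finset.range n, ((((i : ℕ) : ℝ) + 1) ^ 2 + H) ^ (-β)
      ≤ ∑ i ∈ Finset.range m, ((((i : ℕ) : ℝ) + 1) ^ 2 + H) ^ (-β) := by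
    apply Finset.sum_le_sum_of_subset_of_nonneg (Finset.range_subset_range.2 (le_max_left _ _))
    intro i _ _; positivity
  -- sum ≤ integral
  have hsum_int : ∑ i ∈ Finset.range m, ((((i : ℕ) : ℝ) + 1) ^ 2 + H) ^ (-β)
      ≤ ∫ x in (0:ℝ)..(m:ℝ), g0 x := by
    have := (anti ((0:ℝ) + (m:ℕ))).sum_le_integral (f := g0)
    simp only [zero_add] at this
    convert this using 2 with i
    push_cast
    ring_nf
    simp only [hg0]
    ring_nf
  have int1 : IntervalIntegrable g0 MeasureTheory.volume 0 s := hg0c.intervalIntegrable _ _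
  have int2 : IntervalIntegrable g0 MeasureTheory.volume s m := hg0c.intervalIntegrable _ _
  have hsplit : ∫ x in (0:ℝ)..(m:ℝ), g0 x
      = (∫ x in (0:ℝ)..s, g0 x) + ∫ x in s..(m:ℝ), g0 x :=
    (intervalIntegral.integral_add_adjacent_intervals int1 int2).symm
  -- first piece
  have hb1 : (∫ x in (0:ℝ)..s, g0 x) ≤ H ^ ((1:ℝ) / 2 - β) := by
    have hle : ∀ x ∈ Set.Icc (0:ℝ) s, g0 x ≤ H ^ (-β) := by
      intro x hx
      exact Real.rpow_le_rpow_of_nonpos hH0 (by nlinarith [hx.1]) (by linarith)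
    have := intervalIntegral.integral_mono_on (by positivity : (0:ℝ) ≤ s) int1
      (intervalIntegrable_const) hle
    rw [intervalIntegral.integral_const] at this
    calc (∫ x in (0:ℝ)..s, g0 x) ≤ (s - 0) • H ^ (-β) := this
      _ = H ^ ((1:ℝ)/2) * H ^ (-β) := by
          rw [smul_eq_mul, sub_zero, hs, Real.sqrt_eq_rpow]
      _ = H ^ ((1:ℝ) / 2 - β) := by
          rw [← Real.rpow_add hH0]; ring_nf
  -- second piece
  have hb2 : (∫ x in s..(m:ℝ), g0 x) ≤ H ^ ((1:ℝ) / 2 - β) * (1 / (2 * β - 1)) := by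
    have intx : IntervalIntegrable (fun x : ℝ => x ^ (-(2*β))) MeasureTheory.volume s m := by
      apply ContinuousOn.intervalIntegrable
      intro x hx
      rw [Set.uIcc_of_le hsm] at hx
      exact (Real.continuousAt_rpow_const x _ (Or.inl (by nlinarith [hx.1]))).continuousWithinAt
    have hle : ∀ x ∈ Set.Icc s (m:ℝ), g0 x ≤ x ^ (-(2*β)) := by
      intro x hx
      have hx0 : (0:ℝ) < x := by nlinarith [hx.1]
      have h1 : g0 x ≤ (x ^ 2) ^ (-β) :=
        Real.rpow_le_rpow_of_nonpos (by positivity) (by linarith) (by linarith)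
      calc g0 x ≤ (x ^ 2) ^ (-β) := h1
        _ = x ^ (-(2*β)) := by
            rw [← Real.rpow_natCast x 2, ← Real.rpow_mul hx0.le]
            congr 1
            push_cast
            ring
    have hmono := intervalIntegral.integral_mono_on hsm int2 intx hle
    have heval : (∫ x in s..(m:ℝ), x ^ (-(2*β)))
        = ((m:ℝ) ^ (-(2*β)+1) - s ^ (-(2*β)+1)) / (-(2*β)+1) := by
      apply integral_rpow
      right
      constructor
      · intro hc; linarith
      · rw [Set.uIcc_of_le hsm]
        intro hc
        exact absurd hc.1 (by linarith)
    have hsp : (0:ℝ) < s ^ (-(2*β)+1) := Real.rpow_pos_of_pos hs0 _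
    have hmp : (0:ℝ) ≤ (m:ℝ) ^ (-(2*β)+1) := Real.rpow_nonneg (by positivity) _
    have hval : ((m:ℝ) ^ (-(2*β)+1) - s ^ (-(2*β)+1)) / (-(2*β)+1)
        ≤ s ^ (-(2*β)+1) / (2*β-1) := by
      have hc : -(2*β)+1 = -(2*β-1) := by ring
      rw [hc] at hsp hmp ⊢
      rw [div_neg, ← neg_div, neg_sub]
      gcongr
      · linarith
      · linarith
    have hss : s ^ (-(2*β)+1) = H ^ ((1:ℝ)/2 - β) := by
      rw [hs, Real.sqrt_eq_rpow, ← Real.rpow_mul hH0.le]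
      ring_nf
    calc (∫ x in s..(m:ℝ), g0 x) ≤ ∫ x in s..(m:ℝ), x ^ (-(2*β)) := hmono
      _ ≤ s ^ (-(2*β)+1) / (2*β-1) := by rw [heval]; exact hval
      _ = H ^ ((1:ℝ)/2 - β) * (1 / (2*β-1)) := by rw [hss]; ring
  calc ∑ i ∈ Finset.range n, ((((i : ℕ) : ℝ) + 1) ^ 2 + H) ^ (-β)
      ≤ ∑ i ∈ Finset.range m, ((((i : ℕ) : ℝ) + 1) ^ 2 + H) ^ (-β) := hext
    _ ≤ ∫ x in (0:ℝ)..(m:ℝ), g0 x := hsum_int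
    _ = (∫ x in (0:ℝ)..s, g0 x) + ∫ x in s..(m:ℝ), g0 x := hsplit
    _ ≤ H ^ ((1:ℝ)/2 - β) + H ^ ((1:ℝ)/2 - β) * (1 / (2*β-1)) := add_le_add hb1 hb2
    _ = H ^ (1 / 2 - β) * (1 + 1 / (2 * β - 1)) := by ring

private lemma summable_g_nat {β H : ℝ} (hβ : 1 / 2 < β) (hH : 1 ≤ H) :
    Summable fun n : ℕ => (((n : ℕ) : ℝ) ^ 2 + H) ^ (-β) := by
  rw [← summable_nat_add_iff 1]
  apply summable_of_sum_range_le (c := H ^ (1 / 2 - β) * (1 + 1 / (2 * β - 1)))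
    (fun n => by positivity)
  intro n
  have := partial_sum_g_le hβ hH n
  convert this using 2 with i
  push_cast
  ring

private lemma tsum_g_nat_shift_le {β H : ℝ} (hβ : 1 / 2 < β) (hH : 1 ≤ H) :
    ∑' n : ℕ, ((((n : ℕ) : ℝ) + 1) ^ 2 + H) ^ (-β)
      ≤ H ^ (1 / 2 - β) * (1 + 1 / (2 * β - 1)) :=
  Real.tsum_le_of_sum_range_le (fun n => by positivity) (partial_sum_g_le hβ hH)

private lemma summable_g_int {β H : ℝ} (hβ : 1 / 2 < β) (hH : 1 ≤ H) :
    Summable fun i : ℤ => (((i : ℤ) : ℝ) ^ 2 + H) ^ (-β) := by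
  apply Summable.of_nat_of_neg_add_one
  · exact (summable_g_nat hβ hH).congr (fun n => by push_cast; ring_nf)
  · apply ((summable_nat_add_iff 1).2 (summable_g_nat hβ hH)).congr
    intro n
    push_cast
    ring_nf

set_option maxHeartbeats 1000000 in
private lemma tsum_g_int_le {β H : ℝ} (hβ : 1 / 2 < β) (hH : 1 ≤ H) :
    ∑' i : ℤ, (((i : ℤ) : ℝ) ^ 2 + H) ^ (-β)
      ≤ (3 + 2 / (2 * β - 1)) * H ^ (1 / 2 - β) := by
  have hH0 : (0:ℝ) < H := by linarith
  have h1 : Summable fun n : ℕ => ((((n:ℤ)) : ℝ) ^ 2 + H) ^ (-β) :=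
    (summable_g_nat hβ hH).congr (fun n => by push_cast; ring_nf)
  have h2 : Summable fun n : ℕ => (((-((n:ℤ) + 1)) : ℝ) ^ 2 + H) ^ (-β) :=
    ((summable_nat_add_iff 1).2 (summable_g_nat hβ hH)).congr
      (fun n => by push_cast; ring_nf)
  rw [tsum_of_nat_of_neg_add_one h1 (h2.congr (fun n => by push_cast; ring_nf))]
  have e1 : ∑' n : ℕ, ((((n:ℤ)) : ℝ) ^ 2 + H) ^ (-β)
      = H ^ (-β) + ∑' n : ℕ, ((((n:ℕ):ℝ) + 1) ^ 2 + H) ^ (-β) := by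
    rw [Summable.tsum_eq_zero_add h1]
    congr 1
    · norm_num
    · apply tsum_congr; intro n; push_cast; ring_nf
  have e2 : ∑' n : ℕ, ((((-((n:ℤ) + 1)):ℤ) : ℝ) ^ 2 + H) ^ (-β)
      = ∑' n : ℕ, ((((n:ℕ):ℝ) + 1) ^ 2 + H) ^ (-β) := by
    apply tsum_congr; intro n; push_cast; ring_nf
  have hTs := tsum_g_nat_shift_le hβ hH
  have hHe : H ^ (-β) ≤ H ^ (1/2 - β) :=
    Real.rpow_le_rpow_of_exponent_le hH (by linarith)
  have hpos : (0:ℝ) ≤ H ^ (1/2-β) := by positivity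
  have h2b : (0:ℝ) < 2 * β - 1 := by linarith
  calc (∑' n : ℕ, ((((n:ℤ)) : ℝ) ^ 2 + H) ^ (-β))
        + ∑' n : ℕ, ((((-((n:ℤ) + 1)):ℤ) : ℝ) ^ 2 + H) ^ (-β)
      = H ^ (-β) + 2 * ∑' n : ℕ, ((((n:ℕ):ℝ) + 1) ^ 2 + H) ^ (-β) := by
        rw [e1, e2]; ring
    _ ≤ H ^ (1/2 - β) + 2 * (H ^ (1 / 2 - β) * (1 + 1 / (2 * β - 1))) := by
        have := mul_le_mul_of_nonneg_left hTs (by norm_num : (0:ℝ) ≤ 2)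
        linarith
    _ = (3 + 2 / (2 * β - 1)) * H ^ (1 / 2 - β) := by ring

private lemma θreg_mem (Δ h : ℝ) (i j : ℤ) : θreg Δ h i j ∈ Set.Icc 0 π :=
  ⟨Real.arccos_nonneg _, Real.arccos_le_pi _⟩

private lemma snorm_rpow_le (h α : ℝ) (hh : 0 < h) (hα : 0 < α) {Δ : ℝ} (hΔ : 0 < Δ)
    (i j : ℤ) :
    snorm Δ h i j ^ (-α)
      ≤ (Δ / 2) ^ (-α) *
        ((((i : ℤ) : ℝ) ^ 2 + (2 * h / Δ) ^ 2) ^ (-(α / 4)) *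
          (((j : ℤ) : ℝ) ^ 2 + (2 * h / Δ) ^ 2) ^ (-(α / 4))) := by
  set H : ℝ := (2 * h / Δ) ^ 2 with hHdef
  set A : ℝ := ((i : ℤ) : ℝ) ^ 2 with hA
  set B : ℝ := ((j : ℤ) : ℝ) ^ 2 with hB
  have hH0 : 0 < H := by rw [hHdef]; positivity
  have hA0 : 0 ≤ A := by rw [hA]; positivity
  have hB0 : 0 ≤ B := by rw [hB]; positivity
  have hP : 0 < (A + H) * (B + H) := by positivity
  set D : ℝ := (Δ / 2) * ((A + H) * (B + H)) ^ ((1:ℝ) / 4) with hD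
  have hD0 : 0 < D := by
    rw [hD]
    have := Real.rpow_pos_of_pos hP ((1:ℝ)/4)
    positivity
  have hDs : D ≤ snorm Δ h i j := by
    have hD2 : D ^ 2 = (Δ / 2) ^ 2 * Real.sqrt ((A + H) * (B + H)) := by
      rw [hD, mul_pow, ← Real.rpow_natCast (((A + H) * (B + H)) ^ ((1:ℝ) / 4)) 2,
        ← Real.rpow_mul hP.le, Real.sqrt_eq_rpow]
      norm_num
    have hs2 : Real.sqrt ((A + H) * (B + H)) ≤ A + B + H := by
      rw [show A + B + H = Real.sqrt ((A + B + H) ^ 2) from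
        (Real.sqrt_sq (by positivity)).symm]
      apply Real.sqrt_le_sqrt
      nlinarith [mul_nonneg hA0 hB0, mul_nonneg hA0 hH0.le, mul_nonneg hB0 hH0.le]
    have hHh : (Δ / 2) ^ 2 * H = h ^ 2 := by
      rw [hHdef]; field_simp
    have hsq : D ^ 2 ≤ ((i:ℝ) * Δ / 2) ^ 2 + 3 * ((j:ℝ) * Δ / 2) ^ 2 + h ^ 2 := by
      rw [hD2]
      have h1 : (Δ / 2) ^ 2 * Real.sqrt ((A + H) * (B + H)) ≤ (Δ/2)^2 * (A + B + H) :=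
        mul_le_mul_of_nonneg_left hs2 (by positivity)
      have h2 : (Δ/2)^2 * (A + B + H) ≤ ((i:ℝ) * Δ / 2) ^ 2 + 3 * ((j:ℝ) * Δ / 2) ^ 2 + h ^ 2 := by
        rw [hA, hB]
        nlinarith [sq_nonneg ((j:ℝ) * Δ), hHh, mul_nonneg hB0 (sq_nonneg Δ)]
      linarith
    calc D = Real.sqrt (D ^ 2) := (Real.sqrt_sq hD0.le).symm
      _ ≤ snorm Δ h i j := Real.sqrt_le_sqrt hsq
  calc snorm Δ h i j ^ (-α) ≤ D ^ (-α) :=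
        Real.rpow_le_rpow_of_nonpos hD0 hDs (by linarith)
    _ = (Δ / 2) ^ (-α) * ((((A + H) * (B + H)) ^ ((1:ℝ)/4)) ^ (-α)) :=
        Real.mul_rpow (by positivity) (by positivity)
    _ = (Δ / 2) ^ (-α) * ((A + H) * (B + H)) ^ (-(α/4)) := by
        rw [← Real.rpow_mul hP.le, show (1:ℝ)/4 * -α = -(α/4) by ring]
    _ = (Δ / 2) ^ (-α) * ((A + H) ^ (-(α/4)) * (B + H) ^ (-(α/4))) := by
        rw [Real.mul_rpow (by positivity) (by positivity)]

noncomputable def Fterm (ws wg : ℝ → ℝ) (h α Δ : ℝ) (q : ℤ × ℤ) : ℝ :=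
  if q.1 % 2 = q.2 % 2 ∧ q ≠ (0, 0) then
    snorm Δ h q.1 q.2 ^ (-α) * (ws (θreg Δ h q.1 q.2) * wg (θreg Δ h q.1 q.2))
  else 0

private lemma Fterm_nonneg (ws wg : ℝ → ℝ) (h α Δ : ℝ)
    (hws_mem : ∀ θ ∈ Set.Icc (0 : ℝ) π, ws θ ∈ Set.Icc (0 : ℝ) 1)
    (hwg_mem : ∀ θ ∈ Set.Icc (0 : ℝ) π, wg θ ∈ Set.Icc (0 : ℝ) 1)
    (q : ℤ × ℤ) : 0 ≤ Fterm ws wg h α Δ q := by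
  rw [Fterm]
  split
  · exact mul_nonneg (Real.rpow_nonneg (Real.sqrt_nonneg _) _)
      (mul_nonneg (hws_mem _ (θreg_mem Δ h q.1 q.2)).1 (hwg_mem _ (θreg_mem Δ h q.1 q.2)).1)
  · exact le_refl 0

set_option maxHeartbeats 4000000 in
private lemma Fterm_key (ws wg : ℝ → ℝ) (h α : ℝ)
    (hh : 0 < h) (hα : 2 < α)
    (hws_mem : ∀ θ ∈ Set.Icc (0 : ℝ) π, ws θ ∈ Set.Icc (0 : ℝ) 1)
    (hwg_mem : ∀ θ ∈ Set.Icc (0 : ℝ) π, wg θ ∈ Set.Icc (0 : ℝ) 1)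
    {Δ : ℝ} (hΔ : 0 < Δ) (hΔh : Δ ≤ 2 * h) :
    Summable (Fterm ws wg h α Δ) ∧
    Δ ^ 2 * ∑' q : ℤ × ℤ, Fterm ws wg h α Δ q
      ≤ 2 ^ α * (2 * h) ^ (2 - α) * (3 + 2 / (2 * (α/4) - 1)) ^ 2 := by
  have hβ : 1 / 2 < α / 4 := by linarith
  set β : ℝ := α / 4 with hβdef
  set H : ℝ := (2 * h / Δ) ^ 2 with hHdef
  have hH1 : 1 ≤ H := by
    have h1 : 1 ≤ 2 * h / Δ := (le_div_iff₀ hΔ).2 (by linarith)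
    rw [hHdef]; nlinarith
  have hH0 : (0:ℝ) < H := by linarith
  set g : ℤ → ℝ := fun i => (((i : ℤ) : ℝ) ^ 2 + H) ^ (-β) with hg
  have hg_nonneg : ∀ i, 0 ≤ g i := fun i => by
    rw [hg]; dsimp only; positivity
  have hgs : Summable g := summable_g_int hβ hH1
  have hmaj : Summable fun q : ℤ × ℤ => (Δ / 2) ^ (-α) * (g q.1 * g q.2) :=
    (hgs.mul_of_nonneg hgs hg_nonneg hg_nonneg).mul_left _
  have hw01 : ∀ (i j : ℤ), 0 ≤ ws (θreg Δ h i j) * wg (θreg Δ h i j) ∧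
      ws (θreg Δ h i j) * wg (θreg Δ h i j) ≤ 1 := by
    intro i j
    obtain ⟨l1, r1⟩ := hws_mem _ (θreg_mem Δ h i j)
    obtain ⟨l2, r2⟩ := hwg_mem _ (θreg_mem Δ h i j)
    exact ⟨mul_nonneg l1 l2, mul_le_one₀ r1 l2 r2⟩
  have hle : ∀ q : ℤ × ℤ, Fterm ws wg h α Δ q ≤ (Δ / 2) ^ (-α) * (g q.1 * g q.2) := by
    intro q
    have hb := snorm_rpow_le h α hh (by linarith) hΔ q.1 q.2
    have hg1 := hg_nonneg q.1
    have hg2 := hg_nonneg q.2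
    have hrp : (0:ℝ) ≤ (Δ / 2) ^ (-α) := Real.rpow_nonneg (by linarith) _
    rw [Fterm]
    split
    · calc snorm Δ h q.1 q.2 ^ (-α) * (ws (θreg Δ h q.1 q.2) * wg (θreg Δ h q.1 q.2))
          ≤ snorm Δ h q.1 q.2 ^ (-α) * 1 :=
            mul_le_mul_of_nonneg_left (hw01 q.1 q.2).2
              (Real.rpow_nonneg (Real.sqrt_nonneg _) _)
        _ = snorm Δ h q.1 q.2 ^ (-α) := mul_one _
        _ ≤ (Δ / 2) ^ (-α) * (g q.1 * g q.2) := by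
            rw [hg]; dsimp only; rw [hHdef, hβdef]; exact hb
    · exact mul_nonneg hrp (mul_nonneg hg1 hg2)
  have hFs : Summable (Fterm ws wg h α Δ) :=
    Summable.of_nonneg_of_le (Fterm_nonneg ws wg h α Δ hws_mem hwg_mem) hle hmaj
  refine ⟨hFs, ?_⟩
  have h1 : ∑' q : ℤ × ℤ, Fterm ws wg h α Δ q
      ≤ ∑' q : ℤ × ℤ, (Δ / 2) ^ (-α) * (g q.1 * g q.2) :=
    Summable.tsum_le_tsum hle hFs hmaj
  have h2 : ∑' q : ℤ × ℤ, (Δ / 2) ^ (-α) * (g q.1 * g q.2)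
      = (Δ / 2) ^ (-α) * ((∑' i : ℤ, g i) * ∑' i : ℤ, g i) := by
    rw [tsum_mul_left]
    congr 1
    rw [Summable.tsum_prod' (hgs.mul_of_nonneg hgs hg_nonneg hg_nonneg) (fun b => hgs.mul_left (g b))]
    calc ∑' (a : ℤ), ∑' (b : ℤ), g a * g b = ∑' (a : ℤ), g a * ∑' (b : ℤ), g b :=
          tsum_congr fun a => tsum_mul_left
      _ = (∑' i : ℤ, g i) * ∑' i : ℤ, g i := tsum_mul_right
  have hgle : ∑' i : ℤ, g i ≤ (3 + 2 / (2 * β - 1)) * H ^ (1 / 2 - β) :=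
    tsum_g_int_le hβ hH1
  have hgnn : 0 ≤ ∑' i : ℤ, g i := tsum_nonneg hg_nonneg
  have h3 : (∑' i : ℤ, g i) * ∑' i : ℤ, g i
      ≤ ((3 + 2 / (2 * β - 1)) * H ^ (1 / 2 - β)) ^ 2 := by
    rw [sq]
    exact mul_le_mul hgle hgle hgnn (le_trans hgnn hgle)
  have hΔrp : (0:ℝ) ≤ (Δ / 2) ^ (-α) := Real.rpow_nonneg (by linarith) _
  have hHval : H ^ ((1:ℝ) - 2 * β) = (2 * h) ^ (2 - α) * Δ ^ (α - 2) := by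
    rw [hHdef, ← Real.rpow_natCast (2 * h / Δ) 2, ← Real.rpow_mul (by positivity)]
    rw [show ((2:ℕ):ℝ) * ((1:ℝ) - 2*β) = 2 - α by rw [hβdef]; push_cast; ring]
    rw [Real.div_rpow (by linarith) hΔ.le]
    rw [div_eq_mul_inv, ← Real.rpow_neg hΔ.le]
    congr 1
    ring
  have hsq2 : ((3 + 2 / (2 * β - 1)) * H ^ (1 / 2 - β)) ^ 2
      = (3 + 2 / (2 * β - 1)) ^ 2 * H ^ ((1:ℝ) - 2 * β) := by
    rw [mul_pow, ← Real.rpow_natCast (H ^ ((1:ℝ)/2 - β)) 2, ← Real.rpow_mul hH0.le]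
    norm_num
    left
    rw [show ((1:ℝ)/2 - β) * 2 = 1 - 2 * β by ring]
  have e1 : (Δ/2) ^ (-α) = Δ ^ (-α) * 2 ^ α := by
    rw [Real.div_rpow hΔ.le (by norm_num : (0:ℝ) ≤ 2),
      Real.rpow_neg (by norm_num : (0:ℝ) ≤ 2), div_eq_mul_inv, inv_inv]
  have e2 : Δ ^ (2:ℕ) * Δ ^ (-α) * Δ ^ (α - 2) = 1 := by
    rw [← Real.rpow_natCast Δ 2, ← Real.rpow_add hΔ, ← Real.rpow_add hΔ,
      show ((2:ℕ):ℝ) + -α + (α - 2) = 0 by push_cast; ring, Real.rpow_zero]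
  calc Δ ^ 2 * ∑' q : ℤ × ℤ, Fterm ws wg h α Δ q
      ≤ Δ ^ 2 * ((Δ / 2) ^ (-α) * ((∑' i : ℤ, g i) * ∑' i : ℤ, g i)) := by
        rw [← h2]
        exact mul_le_mul_of_nonneg_left h1 (by positivity)
    _ ≤ Δ ^ 2 * ((Δ / 2) ^ (-α) * ((3 + 2 / (2 * β - 1)) * H ^ (1 / 2 - β)) ^ 2) := by
        apply mul_le_mul_of_nonneg_left _ (by positivity)
        exact mul_le_mul_of_nonneg_left h3 hΔrp
    _ = (Δ ^ (2:ℕ) * Δ ^ (-α) * Δ ^ (α-2)) * (2 ^ α * ((2 * h) ^ (2 - α) * (3 + 2 / (2 * β - 1)) ^ 2)) := by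
        rw [hsq2, hHval, e1]
        ring
    _ = 2 ^ α * (2 * h) ^ (2 - α) * (3 + 2 / (2 * β - 1)) ^ 2 := by rw [e2]; ring

private lemma h_le_snorm {h : ℝ} (hh : 0 ≤ h) (Δ : ℝ) (i j : ℤ) : h ≤ snorm Δ h i j := by
  rw [snorm]
  calc h = Real.sqrt (h ^ 2) := (Real.sqrt_sq hh).symm
    _ ≤ _ := Real.sqrt_le_sqrt (by nlinarith [sq_nonneg ((i:ℝ) * Δ / 2), sq_nonneg ((j:ℝ) * Δ / 2)])

set_option maxHeartbeats 1000000 in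
private lemma Fterm_lower (ws wg : ℝ → ℝ) (h α : ℝ) (hh : 0 < h) (hα : 2 < α)
    (hws_anti : AntitoneOn ws (Set.Icc (0 : ℝ) π))
    (hwg_anti : AntitoneOn wg (Set.Icc (0 : ℝ) π))
    (hws_mem : ∀ θ ∈ Set.Icc (0 : ℝ) π, ws θ ∈ Set.Icc (0 : ℝ) 1)
    (hwg_mem : ∀ θ ∈ Set.Icc (0 : ℝ) π, wg θ ∈ Set.Icc (0 : ℝ) 1)
    {ε c1 : ℝ} (hε0 : 0 < ε) (hεπ4 : ε ≤ π / 4)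
    (hc1ws : c1 ≤ ws ε) (hc1wg : c1 ≤ wg ε) (hc10 : 0 < c1)
    {Δ : ℝ} (hΔ : 0 < Δ) {r : ℝ} (hr : r = h / Real.cos ε)
    {a b : ℤ} (ha1 : 1 ≤ a) (hb1 : 1 ≤ b)
    (hae : ((a:ℤ):ℝ) * Δ ≤ Real.sqrt (r^2 - h^2) / 2)
    (hbe : ((b:ℤ):ℝ) * Δ ≤ Real.sqrt (r^2 - h^2) / 2) :
    r ^ (-α) * (c1 * c1) ≤ Fterm ws wg h α Δ (2*a, 2*b) := by
  have hεπ : ε ≤ π := by linarith [Real.pi_pos]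
  have hcos : 0 < Real.cos ε :=
    Real.cos_pos_of_mem_Ioo ⟨by linarith [Real.pi_pos], by linarith [Real.pi_pos]⟩
  have hcos1 : Real.cos ε < 1 := by
    have := Real.strictAntiOn_cos ⟨le_refl (0:ℝ), Real.pi_pos.le⟩ ⟨hε0.le, hεπ⟩ hε0
    simpa using this
  have hr0 : 0 < r := by rw [hr]; positivity
  have hhr : h < r := by
    rw [hr, lt_div_iff₀ hcos]; nlinarith
  have hρ2 : Real.sqrt (r^2 - h^2) ^ 2 = r^2 - h^2 := Real.sq_sqrt (by nlinarith)
  have ha1' : (1:ℝ) ≤ ((a:ℤ):ℝ) := by exact_mod_cast ha1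
  have hb1' : (1:ℝ) ≤ ((b:ℤ):ℝ) := by exact_mod_cast hb1
  have ha0' : 0 ≤ ((a:ℤ):ℝ) * Δ := by nlinarith
  have hb0' : 0 ≤ ((b:ℤ):ℝ) * Δ := by nlinarith
  have hcond : (2*a) % 2 = (2*b) % 2 ∧ ((2*a, 2*b) : ℤ × ℤ) ≠ (0, 0) := by
    constructor
    · rw [Int.mul_emod_right, Int.mul_emod_right]
    · simp only [ne_eq, Prod.mk.injEq, not_and]
      intro hc; omega
  have hsn_le : snorm Δ h (2*a) (2*b) ≤ r := by
    rw [snorm]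
    have h1 : (((a:ℤ):ℝ) * Δ)^2 ≤ (Real.sqrt (r^2 - h^2) / 2)^2 :=
      pow_le_pow_left₀ ha0' hae 2
    have h2 : (((b:ℤ):ℝ) * Δ)^2 ≤ (Real.sqrt (r^2 - h^2) / 2)^2 :=
      pow_le_pow_left₀ hb0' hbe 2
    calc Real.sqrt ((((2*a:ℤ):ℝ) * Δ / 2) ^ 2 + 3 * (((2*b:ℤ):ℝ) * Δ / 2) ^ 2 + h ^ 2)
        ≤ Real.sqrt (r ^ 2) := Real.sqrt_le_sqrt (by push_cast at h1 h2 ⊢; nlinarith)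
      _ = r := Real.sqrt_sq hr0.le
  have hsn_pos : 0 < snorm Δ h (2*a) (2*b) :=
    lt_of_lt_of_le hh (h_le_snorm hh.le Δ _ _)
  have hθle : θreg Δ h (2*a) (2*b) ≤ ε := by
    rw [θreg]
    have h1 : Real.cos ε ≤ h / snorm Δ h (2*a) (2*b) := by
      rw [le_div_iff₀ hsn_pos]
      calc Real.cos ε * snorm Δ h (2*a) (2*b) ≤ Real.cos ε * r :=
            mul_le_mul_of_nonneg_left hsn_le hcos.le
        _ = h := by rw [hr]; field_simp
    calc Real.arccos (h / snorm Δ h (2*a) (2*b)) ≤ Real.arccos (Real.cos ε) := by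
          rw [Real.arccos_eq_pi_div_two_sub_arcsin, Real.arccos_eq_pi_div_two_sub_arcsin]
          have := Real.monotone_arcsin h1
          linarith
      _ = ε := Real.arccos_cos hε0.le hεπ
  have hθmem := θreg_mem Δ h (2*a) (2*b)
  have hεmem' : ε ∈ Set.Icc (0:ℝ) π := ⟨hε0.le, hεπ⟩
  have hwθ : c1 * c1 ≤ ws (θreg Δ h (2*a) (2*b)) * wg (θreg Δ h (2*a) (2*b)) := by
    have hws' : ws ε ≤ ws (θreg Δ h (2*a) (2*b)) := hws_anti hθmem hεmem' hθle
    have hwg' : wg ε ≤ wg (θreg Δ h (2*a) (2*b)) := hwg_anti hθmem hεmem' hθle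
    have hwsθ0 : 0 ≤ ws (θreg Δ h (2*a) (2*b)) := (hws_mem _ hθmem).1
    exact mul_le_mul (by linarith) (by linarith) hc10.le hwsθ0
  have hsnα : r ^ (-α) ≤ snorm Δ h (2*a) (2*b) ^ (-α) :=
    Real.rpow_le_rpow_of_nonpos hsn_pos hsn_le (by linarith)
  have hFeq : Fterm ws wg h α Δ (2*a, 2*b) = snorm Δ h (2*a) (2*b) ^ (-α) *
      (ws (θreg Δ h (2*a) (2*b)) * wg (θreg Δ h (2*a) (2*b))) := by
    rw [Fterm, if_pos hcond]
  rw [hFeq]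
  exact mul_le_mul hsnα hwθ (by positivity) (Real.rpow_nonneg (Real.sqrt_nonneg _) _)

set_option maxHeartbeats 1000000 in
/-- The aggregate interference scaled by the squared inter-satellite spacing stays
bounded away from zero in the high-density limit: `liminf_{Δ→0⁺} Δ²·η(Δ) > 0`. -/
theorem liminf_sq_spacing_eta_pos
    (ws wg : ℝ → ℝ) (h α p σ2 : ℝ)
    (hh : 0 < h) (hα : 2 < α) (hp : 0 < p) (hσ : 0 < σ2)
    (hws_anti : AntitoneOn ws (Set.Icc (0 : ℝ) π))
    (hwg_anti : AntitoneOn wg (Set.Icc (0 : ℝ) π))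
    (hws_cont : ContinuousOn ws (Set.Icc (0 : ℝ) π))
    (hwg_cont : ContinuousOn wg (Set.Icc (0 : ℝ) π))
    (hws_mem : ∀ θ ∈ Set.Icc (0 : ℝ) π, ws θ ∈ Set.Icc (0 : ℝ) 1)
    (hwg_mem : ∀ θ ∈ Set.Icc (0 : ℝ) π, wg θ ∈ Set.Icc (0 : ℝ) 1)
    (hpos : 0 < ws 0 * wg 0) :
    0 < Filter.liminf (fun Δ => Δ ^ 2 * ηreg ws wg h α p σ2 Δ)
        (nhdsWithin 0 (Set.Ioi 0)) := by
  have hη : ∀ Δ, ηreg ws wg h α p σ2 Δ = (p / σ2) * ∑' q : ℤ × ℤ, Fterm ws wg h α Δ q :=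
    fun Δ => rfl
  -- positivity of the gains at 0
  have hmem0 : (0:ℝ) ∈ Set.Icc (0:ℝ) π := ⟨le_refl _, Real.pi_pos.le⟩
  have hws0 : 0 < ws 0 := by
    rcases mul_pos_iff.1 hpos with ⟨h1, _⟩ | ⟨h1, h2⟩
    · exact h1
    · have := (hws_mem 0 hmem0).1; linarith
  have hwg0 : 0 < wg 0 := by
    rcases mul_pos_iff.1 hpos with ⟨_, h1⟩ | ⟨h1, h2⟩
    · exact h1
    · have := (hwg_mem 0 hmem0).1; linarith
  -- choose ε
  have hπ4 : (0:ℝ) < π / 4 := by positivity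
  have hmono : nhdsWithin (0:ℝ) (Set.Ioc 0 (π/4)) ≤ nhdsWithin 0 (Set.Icc 0 π) :=
    nhdsWithin_mono 0 (fun x hx => ⟨hx.1.le, le_trans hx.2 (by linarith [Real.pi_pos])⟩)
  haveI : (nhdsWithin (0:ℝ) (Set.Ioc 0 (π/4))).NeBot := by
    rw [nhdsWithin_Ioc_eq_nhdsGT hπ4]; infer_instance
  have hev1 : ∀ᶠ x in nhdsWithin (0:ℝ) (Set.Icc 0 π), ws 0 / 2 < ws x :=
    (hws_cont 0 hmem0).eventually (eventually_gt_nhds (by linarith))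
  have hev2 : ∀ᶠ x in nhdsWithin (0:ℝ) (Set.Icc 0 π), wg 0 / 2 < wg x :=
    (hwg_cont 0 hmem0).eventually (eventually_gt_nhds (by linarith))
  obtain ⟨ε, hεmem, hεws, hεwg⟩ :=
    ((eventually_mem_nhdsWithin).and ((hev1.filter_mono hmono).and
      (hev2.filter_mono hmono))).exists
  obtain ⟨hε0, hεπ4⟩ := hεmem
  set c1 : ℝ := min (ws 0 / 2) (wg 0 / 2) with hc1
  have hc10 : 0 < c1 := by rw [hc1]; positivity
  have hc1ws : c1 ≤ ws ε := le_trans (min_le_left _ _) hεws.le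
  have hc1wg : c1 ≤ wg ε := le_trans (min_le_right _ _) hεwg.le
  have hεπ : ε ≤ π := by linarith [Real.pi_pos]
  have hcos : 0 < Real.cos ε :=
    Real.cos_pos_of_mem_Ioo ⟨by linarith [Real.pi_pos], by linarith [Real.pi_pos]⟩
  have hcos1 : Real.cos ε < 1 := by
    have := Real.strictAntiOn_cos ⟨le_refl (0:ℝ), Real.pi_pos.le⟩ ⟨hε0.le, hεπ⟩ hε0
    simpa using this
  set r : ℝ := h / Real.cos ε with hr
  have hr0 : 0 < r := by rw [hr]; positivity
  have hhr : h < r := by rw [hr, lt_div_iff₀ hcos]; nlinarith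
  set ρ : ℝ := Real.sqrt (r^2 - h^2) with hρ
  have hρ0 : 0 < ρ := Real.sqrt_pos.2 (by nlinarith)
  have hrα : 0 < r ^ (-α) := Real.rpow_pos_of_pos hr0 _
  set K : ℝ := p / σ2 * ((ρ/4)^2 * (r ^ (-α) * (c1 * c1))) with hK
  have hKpos : 0 < K := by rw [hK]; positivity
  set δ : ℝ := min (ρ/5) (2*h) with hδ
  have hδ0 : 0 < δ := by rw [hδ]; positivity
  set M : ℝ := 2 ^ α * (2 * h) ^ (2 - α) * (3 + 2 / (2 * (α/4) - 1)) ^ 2 with hM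
  -- the lower bound event
  have hlow : ∀ Δ ∈ Set.Ioo (0:ℝ) δ, K ≤ Δ ^ 2 * ηreg ws wg h α p σ2 Δ := by
    intro Δ hΔmem
    obtain ⟨hΔ0, hΔδ⟩ := hΔmem
    have hΔρ : Δ < ρ / 4 := by
      have h1 : Δ < ρ/5 := lt_of_lt_of_le hΔδ (min_le_left _ _)
      linarith
    have hΔh2 : Δ ≤ 2 * h := le_of_lt (lt_of_lt_of_le hΔδ (min_le_right _ _))
    obtain ⟨hFs, -⟩ := Fterm_key ws wg h α hh hα hws_mem hwg_mem hΔ0 hΔh2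
    set x : ℝ := ρ / (2 * Δ) with hx
    have hx2 : 2 < x := by
      rw [hx, lt_div_iff₀ (by linarith)]
      linarith
    set N : ℕ := ⌊x⌋₊ with hN
    have hNx : (N:ℝ) ≤ x := Nat.floor_le (by positivity)
    have hNgt : x - 1 < (N:ℝ) := Nat.sub_one_lt_floor x
    have hN1 : 1 ≤ (N:ℝ) := by linarith
    have hΔN : ρ / 4 ≤ Δ * N := by
      have h1 : x / 2 ≤ (N:ℝ) := by linarith
      have h2 : Δ * (x / 2) = ρ / 4 := by
        rw [hx]; field_simp; ring
      nlinarith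
    have hNΔρ : (N:ℝ) * Δ ≤ ρ / 2 := by
      have h1 : (N:ℝ) * Δ ≤ x * Δ := by nlinarith
      have h2 : x * Δ = ρ / 2 := by rw [hx]; field_simp
      linarith
    set t : Finset (ℤ × ℤ) := Finset.Icc 1 (N:ℤ) ×ˢ Finset.Icc 1 (N:ℤ) with ht
    have hcard : t.card = N * N := by
      rw [ht, Finset.card_product, Int.card_Icc]
      simp
    set per : ℝ := r ^ (-α) * (c1 * c1) with hper
    have hperpos : 0 < per := by rw [hper]; positivity
    have helem : ∀ ab ∈ t, per ≤ Fterm ws wg h α Δ (2 * ab.1, 2 * ab.2) := by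
      rintro ⟨a, b⟩ hab
      rw [ht, Finset.mem_product, Finset.mem_Icc, Finset.mem_Icc] at hab
      obtain ⟨⟨ha1, haN⟩, hb1, hbN⟩ := hab
      have haN' : ((a:ℤ):ℝ) ≤ (N:ℝ) := by exact_mod_cast haN
      have hbN' : ((b:ℤ):ℝ) ≤ (N:ℝ) := by exact_mod_cast hbN
      apply Fterm_lower ws wg h α hh hα hws_anti hwg_anti hws_mem hwg_mem hε0 hεπ4
        hc1ws hc1wg hc10 hΔ0 hr ha1 hb1
      · rw [← hρ]
        calc ((a:ℤ):ℝ) * Δ ≤ (N:ℝ) * Δ := by nlinarith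
          _ ≤ ρ / 2 := hNΔρ
      · rw [← hρ]
        calc ((b:ℤ):ℝ) * Δ ≤ (N:ℝ) * Δ := by nlinarith
          _ ≤ ρ / 2 := hNΔρ
    set S : Finset (ℤ × ℤ) := t.image (fun ab => (2*ab.1, 2*ab.2)) with hS
    have hsum1 : ∑ q ∈ S, Fterm ws wg h α Δ q = ∑ ab ∈ t, Fterm ws wg h α Δ (2*ab.1, 2*ab.2) := by
      rw [hS]
      apply Finset.sum_image
      intro x1 _ x2 _ hx12
      rw [Prod.ext_iff] at hx12 ⊢
      obtain ⟨e1, e2⟩ := hx12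
      dsimp only at e1 e2
      constructor <;> omega
    have hsum2 : ((N:ℝ) * N) * per ≤ ∑ ab ∈ t, Fterm ws wg h α Δ (2*ab.1, 2*ab.2) := by
      have h1 := Finset.card_nsmul_le_sum t (fun ab => Fterm ws wg h α Δ (2*ab.1, 2*ab.2)) per helem
      rw [hcard] at h1
      calc ((N:ℝ) * N) * per = (N * N : ℕ) • per := by
            rw [nsmul_eq_mul]; push_cast; ring
        _ ≤ _ := h1
    have hsum3 : ∑ q ∈ S, Fterm ws wg h α Δ q ≤ ∑' q : ℤ × ℤ, Fterm ws wg h α Δ q :=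
      Summable.sum_le_tsum S (fun q _ => Fterm_nonneg ws wg h α Δ hws_mem hwg_mem q) hFs
    have htsum : ((N:ℝ) * N) * per ≤ ∑' q : ℤ × ℤ, Fterm ws wg h α Δ q := by
      rw [← hsum1] at hsum2
      linarith
    rw [hη]
    have hΔN2 : (ρ/4)^2 ≤ (Δ * N)^2 := pow_le_pow_left₀ (by positivity) hΔN 2
    have h4 : (ρ/4)^2 * per ≤ Δ^2 * (((N:ℝ) * N) * per) := by
      calc (ρ/4)^2 * per ≤ (Δ * N)^2 * per := mul_le_mul_of_nonneg_right hΔN2 hperpos.le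
        _ = Δ^2 * (((N:ℝ) * N) * per) := by ring
    have h5 : Δ^2 * (((N:ℝ) * N) * per) ≤ Δ^2 * ∑' q : ℤ × ℤ, Fterm ws wg h α Δ q :=
      mul_le_mul_of_nonneg_left htsum (by positivity)
    have hps : 0 < p / σ2 := by positivity
    calc K = p / σ2 * ((ρ/4)^2 * per) := by rw [hK, hper]
      _ ≤ p / σ2 * (Δ^2 * ∑' q : ℤ × ℤ, Fterm ws wg h α Δ q) := by
          apply mul_le_mul_of_nonneg_left _ hps.le
          linarith
      _ = Δ ^ 2 * (p / σ2 * ∑' q : ℤ × ℤ, Fterm ws wg h α Δ q) := by ring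
  -- events
  have hIoo : Set.Ioo (0:ℝ) δ ∈ nhdsWithin (0:ℝ) (Set.Ioi 0) :=
    Ioo_mem_nhdsGT hδ0
  have hup_ev : ∀ᶠ Δ in nhdsWithin (0:ℝ) (Set.Ioi 0),
      (fun Δ => Δ ^ 2 * ηreg ws wg h α p σ2 Δ) Δ ≤ p / σ2 * M := by
    filter_upwards [hIoo] with Δ hΔmem
    obtain ⟨hΔ0, hΔδ⟩ := hΔmem
    have hΔh2 : Δ ≤ 2 * h := le_of_lt (lt_of_lt_of_le hΔδ (min_le_right _ _))
    obtain ⟨-, hub⟩ := Fterm_key ws wg h α hh hα hws_mem hwg_mem hΔ0 hΔh2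
    have hps : 0 ≤ p / σ2 := by positivity
    calc Δ ^ 2 * ηreg ws wg h α p σ2 Δ
        = p / σ2 * (Δ ^ 2 * ∑' q : ℤ × ℤ, Fterm ws wg h α Δ q) := by
          rw [hη]; ring
      _ ≤ p / σ2 * M := mul_le_mul_of_nonneg_left (by rw [hM]; exact hub) hps
  have hlow_ev : ∀ᶠ Δ in nhdsWithin (0:ℝ) (Set.Ioi 0),
      K ≤ (fun Δ => Δ ^ 2 * ηreg ws wg h α p σ2 Δ) Δ := by
    filter_upwards [hIoo] with Δ hΔmem
    exact hlow Δ hΔmem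
  have hcb : Filter.IsCoboundedUnder (· ≥ ·) (nhdsWithin (0:ℝ) (Set.Ioi 0))
      (fun Δ => Δ ^ 2 * ηreg ws wg h α p σ2 Δ) :=
    Filter.IsBoundedUnder.isCoboundedUnder_ge ⟨p / σ2 * M, Filter.eventually_map.2 hup_ev⟩
  exact lt_of_lt_of_le hKpos (Filter.le_liminf_of_le hcb hlow_ev)
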